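/- Let (Ω, ℱ, ℙ) be a probability space. Let r > 0, let N : Ω → ℕ be a random variable whose law is the Poisson distribution with rate r, and let (X_i)_{i∈ℕ} be random variables with values in a measurable space E, identically distributed with common law μ, such that the family consisting of N together with all the X_i is independent. Let f : E → ℝ be measurable with ∫ |f| dμ < ∞. Then the random variable ∏_{i=0}^{N-1} (1 + f(X_i)) is integrable and E[ ∏_{i=0}^{N-1} (1 + f(X_i)) ] = exp( r · ∫ f dμ ). -/

import Mathlib

open MeasureTheory ProbabilityTheory
open scoped ENNReal NNReal

/-- The index family for the joint independence of a counting variable `N : Ω → ℕ`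
(at index `none`) together with a sequence of `E`-valued variables (at indices `some i`). -/
abbrev NXFam (E : Type*) : Option ℕ → Type _ :=
  fun o => match o with
  | none => ULift ℕ
  | some _ => E

/-- The canonical measurable space structures on `NXFam E`. -/
def NXFamMeas (E : Type*) [MeasurableSpace E] : ∀ o, MeasurableSpace (NXFam E o) :=
  fun o => match o with
  | none => inferInstance
  | some _ => inferInstance

/-- The family of random variables consisting of `N` (at index `none`) and the `X i`
(at indices `some i`). -/
def NXFun {Ω E : Type*} (N : Ω → ℕ) (X : ℕ → Ω → E) : ∀ o, Ω → NXFam E o :=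
  fun o => match o with
  | none => fun ω => ULift.up (N ω)
  | some i => X i

/-- Integral of a finite product of independent, integrable real random variables. -/
theorem aux_indep_finset_prod {Ω ι : Type*} [MeasurableSpace Ω] {P : Measure Ω}
    [IsProbabilityMeasure P] {Z : ι → Ω → ℝ}
    (hZ : iIndepFun Z P)
    (hmeas : ∀ i, Measurable (Z i)) (hint : ∀ i, Integrable (Z i) P) (s : Finset ι) :
    Integrable (fun ω => ∏ i ∈ s, Z i ω) P ∧
      ∫ ω, ∏ i ∈ s, Z i ω ∂P = ∏ i ∈ s, ∫ ω, Z i ω ∂P := by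
  classical
  induction s using Finset.cons_induction with
  | empty => simp
  | cons a s ha ih =>
    have hip : IndepFun (∏ j ∈ s, Z j) (Z a) P :=
      hZ.indepFun_finsetProd_of_notMem hmeas ha
    have hps : (∏ j ∈ s, Z j) = fun ω => ∏ j ∈ s, Z j ω := by
      funext ω; simp
    have hintp : Integrable (fun ω => ∏ j ∈ s, Z j ω) P := ih.1
    have hmul : Integrable ((∏ j ∈ s, Z j) * Z a) P := by
      refine hip.integrable_mul ?_ (hint a)
      rw [hps]; exact hintp
    have hintmul := hip.integral_mul_eq_mul_integral (by rw [hps]; exact hintp.aestronglyMeasurable) (hint a).aestronglyMeasurable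
    constructor
    · have : (fun ω => ∏ i ∈ Finset.cons a s ha, Z i ω)
        = (∏ j ∈ s, Z j) * Z a := by
        funext ω; rw [Finset.prod_cons]; simp [mul_comm, Finset.prod_apply]
      rw [this]; exact hmul
    · calc ∫ ω, ∏ i ∈ Finset.cons a s ha, Z i ω ∂P
          = ∫ ω, ((∏ j ∈ s, Z j) * Z a) ω ∂P := by
            congr 1; funext ω; rw [Finset.prod_cons]; simp [mul_comm, Finset.prod_apply]
      _ = (∫ ω, (∏ j ∈ s, Z j) ω ∂P) * ∫ ω, Z a ω ∂P := hintmul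
      _ = ∏ i ∈ Finset.cons a s ha, ∫ ω, Z i ω ∂P := by
            rw [hps, Finset.prod_cons, ih.2, mul_comm]

theorem stmt_4 {Ω : Type*} [MeasurableSpace Ω] (P : Measure Ω) [IsProbabilityMeasure P]
    {E : Type*} [MeasurableSpace E] (r : NNReal) (hr : 0 < r)
    (N : Ω → ℕ) (hN : Measurable N) (hNlaw : P.map N = poissonMeasure r)
    (X : ℕ → Ω → E) (hX : ∀ i, Measurable (X i))
    (μ : Measure E) [IsProbabilityMeasure μ] (hXlaw : ∀ i, P.map (X i) = μ)
    (hindep : iIndepFun (m := NXFamMeas E) (NXFun N X) P)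
    (f : E → ℝ) (hf : Measurable f) (hfint : Integrable f μ) :
    Integrable (fun ω => ∏ i ∈ Finset.range (N ω), (1 + f (X i ω))) P ∧
      ∫ ω, ∏ i ∈ Finset.range (N ω), (1 + f (X i ω)) ∂P =
        Real.exp (r * ∫ x, f x ∂μ) := by
  classical
  -- law of N on singletons
  have hPN : ∀ n : ℕ, P (N ⁻¹' {n}) = ENNReal.ofReal (poissonPMFReal r n) := by
    intro n
    rw [← Measure.map_apply hN (measurableSet_singleton n), hNlaw, poissonMeasure,
      Measure.sum_smul_dirac_singleton]
    rfl
  -- key computation for an arbitrary integrable h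
  have key : ∀ (h : E → ℝ), Measurable h → Integrable h μ → ∀ n : ℕ,
      Integrable (fun ω => (if N ω = n then (1:ℝ) else 0) * ∏ i ∈ Finset.range n, h (X i ω)) P ∧
      ∫ ω, (if N ω = n then (1:ℝ) else 0) * ∏ i ∈ Finset.range n, h (X i ω) ∂P
        = poissonPMFReal r n * (∫ x, h x ∂μ) ^ n := by
    intro h hhm hhint n
    set g : ∀ o, NXFam E o → ℝ := fun o => match o with
      | none => fun u : ULift ℕ => if u.down = n then (1:ℝ) else 0
      | some _ => h with hgdef
    set Z : Option ℕ → Ω → ℝ := fun o => g o ∘ NXFun N X o with hZdef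
    have hgm : ∀ o, Measurable[(NXFamMeas E) o] (g o) := by
      rintro (_ | i)
      · exact (measurable_of_countable (fun k : ℕ => if k = n then (1:ℝ) else 0)).comp measurable_down
      · exact hhm
    have hZindep : iIndepFun Z P := hindep.comp g hgm
    have hZmeas : ∀ o, Measurable (Z o) := by
      rintro (_ | i)
      · exact (measurable_of_countable _).comp (measurable_up.comp hN)
      · exact hhm.comp (hX i)
    have hZnone_eq : Z none = (N ⁻¹' {n}).indicator (fun _ => (1:ℝ)) := by
      funext ω
      by_cases hc : N ω = n <;>
        simp [hZdef, hgdef, NXFun, Function.comp, hc, Set.indicator_apply]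
    have hXint : ∀ i, Integrable (fun ω => h (X i ω)) P := by
      intro i
      have h1 : Integrable h (P.map (X i)) := by rw [hXlaw i]; exact hhint
      exact (integrable_map_measure hhm.aestronglyMeasurable (hX i).aemeasurable).mp h1
    have hXeq : ∀ i, ∫ ω, h (X i ω) ∂P = ∫ x, h x ∂μ := by
      intro i
      rw [← hXlaw i, integral_map (hX i).aemeasurable hhm.aestronglyMeasurable]
    have hZint : ∀ o, Integrable (Z o) P := by
      rintro (_ | i)
      · rw [hZnone_eq]
        exact (integrable_const (1:ℝ)).indicator (hN (measurableSet_singleton n))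
      · exact hXint i
    have hnone : (none : Option ℕ) ∉ (Finset.range n).image some := by simp
    obtain ⟨hti, hte⟩ := aux_indep_finset_prod hZindep hZmeas hZint
      (Finset.cons none ((Finset.range n).image some) hnone)
    have hsome_inj : Set.InjOn some ((Finset.range n) : Set ℕ) := fun a _ b _ hab =>
      Option.some_injective _ hab
    have hprod : ∀ ω, ∏ o ∈ Finset.cons none ((Finset.range n).image some) hnone, Z o ω
        = (if N ω = n then (1:ℝ) else 0) * ∏ i ∈ Finset.range n, h (X i ω) := by
      intro ω
      rw [Finset.prod_cons, Finset.prod_image (fun a _ b _ hab => Option.some_injective _ hab)]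
      rfl
    have hZnone_int : ∫ ω, Z none ω ∂P = poissonPMFReal r n := by
      have : (fun ω => Z none ω) = (N ⁻¹' {n}).indicator (fun _ => (1:ℝ)) := hZnone_eq
      rw [this, integral_indicator_const (1:ℝ) (hN (measurableSet_singleton n)), measureReal_def, hPN n,
        smul_eq_mul, mul_one, ENNReal.toReal_ofReal poissonPMFReal_nonneg]
    constructor
    · have : (fun ω => (if N ω = n then (1:ℝ) else 0) * ∏ i ∈ Finset.range n, h (X i ω))
          = fun ω => ∏ o ∈ Finset.cons none ((Finset.range n).image some) hnone, Z o ω := by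
        funext ω; rw [hprod]
      rw [this]; exact hti
    · calc ∫ ω, (if N ω = n then (1:ℝ) else 0) * ∏ i ∈ Finset.range n, h (X i ω) ∂P
          = ∫ ω, ∏ o ∈ Finset.cons none ((Finset.range n).image some) hnone, Z o ω ∂P := by
            congr 1; funext ω; rw [hprod]
      _ = ∏ o ∈ Finset.cons none ((Finset.range n).image some) hnone, ∫ ω, Z o ω ∂P := hte
      _ = (∫ ω, Z none ω ∂P) * ∏ i ∈ Finset.range n, ∫ ω, Z (some i) ω ∂P := by
            rw [Finset.prod_cons, Finset.prod_image (fun a _ b _ hab =>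
              Option.some_injective _ hab)]
      _ = poissonPMFReal r n * (∫ x, h x ∂μ) ^ n := by
            rw [hZnone_int]
            congr 1
            have : ∀ i ∈ Finset.range n, ∫ ω, Z (some i) ω ∂P = ∫ x, h x ∂μ := by
              intro i _; exact hXeq i
            rw [Finset.prod_congr rfl this, Finset.prod_const, Finset.card_range]
  -- main part
  set m := ∫ x, f x ∂μ with hm
  set g : Ω → ℝ := fun ω => ∏ i ∈ Finset.range (N ω), (1 + f (X i ω)) with hgdef
  set G : ℕ → Ω → ℝ := fun n ω =>
    (if N ω = n then (1:ℝ) else 0) * ∏ i ∈ Finset.range n, (1 + f (X i ω)) with hG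
  set Gabs : ℕ → Ω → ℝ := fun n ω =>
    (if N ω = n then (1:ℝ) else 0) * ∏ i ∈ Finset.range n, |1 + f (X i ω)| with hGa
  have hone_m : Measurable (fun x => (1:ℝ) + f x) := measurable_const.add hf
  have hone_int : Integrable (fun x => (1:ℝ) + f x) μ := (integrable_const 1).add hfint
  have habs_m : Measurable (fun x => |(1:ℝ) + f x|) := hone_m.abs
  have habs_int : Integrable (fun x => |(1:ℝ) + f x|) μ := hone_int.abs
  have keyf := key (fun x => 1 + f x) hone_m hone_int
  have keyabs := key (fun x => |(1:ℝ) + f x|) habs_m habs_int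
  set a := ∫ x, |(1:ℝ) + f x| ∂μ with ha
  have ha0 : 0 ≤ a := integral_nonneg fun x => abs_nonneg _
  have hc : ∫ x, (1:ℝ) + f x ∂μ = 1 + m := by
    rw [integral_add (integrable_const 1) hfint, integral_const]; simp [hm]
  have hsum_exp : ∀ c : ℝ, HasSum (fun n => poissonPMFReal r n * c ^ n)
      (Real.exp (-(r:ℝ)) * Real.exp (r * c)) := by
    intro c
    have h1 : HasSum (fun n : ℕ => ((r:ℝ) * c) ^ n / n.factorial) (Real.exp ((r:ℝ) * c)) := by
      rw [Real.exp_eq_exp_ℝ]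
      exact NormedSpace.expSeries_div_hasSum_exp ((r:ℝ) * c)
    have h2 := h1.mul_left (Real.exp (-(r:ℝ)))
    convert h2 using 2 with n
    · rfl
    unfold poissonPMFReal
    rw [mul_pow]; ring
  have hpm : ∀ n, Measurable fun ω => ∏ i ∈ Finset.range n, (1 + f (X i ω)) := by
    intro n
    apply Finset.measurable_prod
    intro i _
    exact measurable_const.add (hf.comp (hX i))
  have hGm : ∀ n, Measurable (G n) := by
    intro n
    exact ((measurable_of_countable (fun k : ℕ => if k = n then (1:ℝ) else 0)).comp hN).mul (hpm n)
  have hgm : Measurable g := by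
    have hF : Measurable (fun p : Ω × ℕ => ∏ i ∈ Finset.range p.2, (1 + f (X i p.1))) :=
      measurable_from_prod_countable_left fun n => hpm n
    exact hF.comp (measurable_id.prodMk hN)
  have hnorm_eq : ∀ n ω, (‖G n ω‖₊ : ℝ≥0∞) = ENNReal.ofReal (Gabs n ω) := by
    intro n ω
    rw [← enorm_eq_nnnorm, Real.enorm_eq_ofReal_abs]
    congr 1
    simp only [hG, hGa, abs_mul, Finset.abs_prod]
    congr 1
    split <;> simp
  have hGabs_nn : ∀ n ω, 0 ≤ Gabs n ω := by
    intro n ω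
    apply mul_nonneg
    · split <;> norm_num
    · exact Finset.prod_nonneg fun i _ => abs_nonneg _
  have hS : ∑' n, ∫⁻ ω, (‖G n ω‖₊ : ℝ≥0∞) ∂P
      = ENNReal.ofReal (∑' n, poissonPMFReal r n * a ^ n) := by
    rw [ENNReal.ofReal_tsum_of_nonneg
      (fun n => mul_nonneg poissonPMFReal_nonneg (pow_nonneg ha0 n)) (hsum_exp a).summable]
    congr 1; funext n
    calc ∫⁻ ω, (‖G n ω‖₊ : ℝ≥0∞) ∂P = ∫⁻ ω, ENNReal.ofReal (Gabs n ω) ∂P :=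
          lintegral_congr fun ω => hnorm_eq n ω
    _ = ENNReal.ofReal (∫ ω, Gabs n ω ∂P) :=
          (ofReal_integral_eq_lintegral_ofReal (keyabs n).1 (ae_of_all _ (hGabs_nn n))).symm
    _ = ENNReal.ofReal (poissonPMFReal r n * a ^ n) := by
          congr 1
          exact (keyabs n).2
  have hS_ne : ∑' n, ∫⁻ ω, (‖G n ω‖₊ : ℝ≥0∞) ∂P ≠ ⊤ := by
    rw [hS]; exact ENNReal.ofReal_ne_top
  have hgG : ∀ ω, g ω = G (N ω) ω := by
    intro ω
    simp [hG, hgdef]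
  have hGzero : ∀ ω n, n ≠ N ω → G n ω = 0 := by
    intro ω n hn
    simp [hG, hn.symm]
  have hg_tsum : ∀ ω, g ω = ∑' n, G n ω := by
    intro ω
    rw [tsum_eq_single (N ω) (fun n hn => hGzero ω n hn)]
    exact hgG ω
  have hfin : ∫⁻ ω, (‖g ω‖₊ : ℝ≥0∞) ∂P ≠ ⊤ := by
    have hpt : ∀ ω, ((‖g ω‖₊ : ℝ≥0∞)) = ∑' n, (‖G n ω‖₊ : ℝ≥0∞) := by
      intro ω
      rw [tsum_eq_single (N ω) (fun n hn => by rw [hGzero ω n hn]; simp), hgG ω]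
    calc ∫⁻ ω, (‖g ω‖₊ : ℝ≥0∞) ∂P = ∫⁻ ω, ∑' n, (‖G n ω‖₊ : ℝ≥0∞) ∂P :=
          lintegral_congr hpt
    _ = ∑' n, ∫⁻ ω, (‖G n ω‖₊ : ℝ≥0∞) ∂P :=
          lintegral_tsum fun n => (hGm n).enorm.aemeasurable
    _ ≠ ⊤ := hS_ne
  have hgint : Integrable g P := ⟨hgm.aestronglyMeasurable, lt_top_iff_ne_top.mpr hfin⟩
  refine ⟨hgint, ?_⟩
  have h2 : ∀ n, ∫ ω, G n ω ∂P = poissonPMFReal r n * (1 + m) ^ n := by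
    intro n
    calc ∫ ω, G n ω ∂P
        = ∫ ω, (if N ω = n then (1:ℝ) else 0) * ∏ i ∈ Finset.range n, (1 + f (X i ω)) ∂P := by
          simp only [hG]
    _ = poissonPMFReal r n * (∫ x, (1:ℝ) + f x ∂μ) ^ n := (keyf n).2
    _ = poissonPMFReal r n * (1 + m) ^ n := by rw [hc]
  calc ∫ ω, g ω ∂P = ∫ ω, ∑' n, G n ω ∂P := by
        congr 1; funext ω; exact hg_tsum ω
  _ = ∑' n, ∫ ω, G n ω ∂P :=
        integral_tsum (fun n => (hGm n).aestronglyMeasurable) hS_ne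
  _ = ∑' n, poissonPMFReal r n * (1 + m) ^ n := tsum_congr h2
  _ = Real.exp (-(r:ℝ)) * Real.exp (r * (1 + m)) := (hsum_exp (1 + m)).tsum_eq
  _ = Real.exp ((r:ℝ) * m) := by rw [← Real.exp_add]; ring_nf
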